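/- Let 𝓕 be a lattice of subsets of a set E. If X ∈ Bₙ(𝓕) is given by a decreasing chain X₁ ⊇ ⋯ ⊇ Xₙ in 𝓕 and Y ∈ Bₘ(𝓕) is given by a decreasing chain Y₁ ⊇ ⋯ ⊇ Yₘ in 𝓕, then the sets Z_k = ⋃ { X_i ∩ Y_j : i + j = k + 1 and i, j are not both even } (for 1 ≤ k ≤ n + m − 1) form a decreasing chain of members of 𝓕 whose alternating difference Z₁ − Z₂ + ⋯ ± Z_{n+m−1} equals X ∩ Y; in particular X ∩ Y ∈ B_{n+m−1}(𝓕). -/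

import Mathlib

open scoped Classical


/-- The alternating difference `(X₁ ∖ X₂) ∪ (X₃ ∖ X₄) ∪ ⋯` of a (decreasing,
eventually empty) chain of sets, indexed from `0` (so `X i` is `X_{i+1}`). -/
def altDiff {E : Type*} (X : ℕ → Set E) : Set E :=
  ⋃ k, X (2 * k) \ X (2 * k + 1)

/-- The `n`-th level `Bₙ(𝓕)` of the difference hierarchy over `𝓕`. -/
def diffHier {E : Type*} (F : Set (Set E)) (n : ℕ) : Set (Set E) :=
  {S | ∃ X : ℕ → Set E, (∀ i, i < n → X i ∈ F) ∧ (∀ i, n ≤ i → X i = ∅) ∧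
    (∀ i j, i ≤ j → X j ⊆ X i) ∧ S = altDiff X}

private lemma finUnion_mem {E : Type*} (F : Set (Set E))
    (hempty : (∅ : Set E) ∈ F)
    (hunion : ∀ X ∈ F, ∀ Y ∈ F, X ∪ Y ∈ F)
    (s : Finset ℕ) (f : ℕ → Set E) (hf : ∀ i ∈ s, f i ∈ F) :
    (⋃ i ∈ s, f i) ∈ F := by
  classical
  induction s using Finset.induction_on with
  | empty => simpa using hempty
  | insert _ _ hx ih =>
      rw [Finset.set_biUnion_insert]
      exact hunion _ (hf _ (Finset.mem_insert_self _ _)) _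
        (ih fun i hi => hf i (Finset.mem_insert_of_mem hi))

private lemma count_mem_iff {E : Type*} (X : ℕ → Set E)
    (hdec : ∀ i j, i ≤ j → X j ⊆ X i) (x : E) (h : ∃ i, x ∉ X i) (i : ℕ) :
    x ∈ X i ↔ i < Nat.find h := by
  constructor
  · intro hx
    by_contra hlt
    exact Nat.find_spec h (hdec _ _ (Nat.le_of_not_lt hlt) hx)
  · intro hi
    by_contra hx
    exact absurd hi (not_lt.2 (Nat.find_le hx))

private lemma mem_altDiff_iff {E : Type*} (X : ℕ → Set E)
    (hdec : ∀ i j, i ≤ j → X j ⊆ X i) (x : E) (h : ∃ i, x ∉ X i) :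
    x ∈ altDiff X ↔ Nat.find h % 2 = 1 := by
  simp only [altDiff, Set.mem_iUnion, Set.mem_diff]
  constructor
  · rintro ⟨k, h1, h2⟩
    rw [count_mem_iff X hdec x h] at h1 h2
    omega
  · intro hodd
    refine ⟨Nat.find h / 2, ?_, ?_⟩
    · rw [count_mem_iff X hdec x h]; omega
    · rw [count_mem_iff X hdec x h]; omega

theorem inter_mem_diffHier {E : Type*} (F : Set (Set E))
    (hempty : (∅ : Set E) ∈ F) (huniv : (Set.univ : Set E) ∈ F)
    (hunion : ∀ X ∈ F, ∀ Y ∈ F, X ∪ Y ∈ F)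
    (hinter : ∀ X ∈ F, ∀ Y ∈ F, X ∩ Y ∈ F)
    (n m : ℕ) (X Y : ℕ → Set E)
    (hXF : ∀ i, i < n → X i ∈ F) (hXe : ∀ i, n ≤ i → X i = ∅)
    (hXdec : ∀ i j, i ≤ j → X j ⊆ X i)
    (hYF : ∀ j, j < m → Y j ∈ F) (hYe : ∀ j, m ≤ j → Y j = ∅)
    (hYdec : ∀ i j, i ≤ j → Y j ⊆ Y i)
    (Z : ℕ → Set E)
    (hZ : ∀ k, Z k =
      ⋃ (p : ℕ × ℕ) (_ : p.1 + p.2 = k ∧ ¬(Odd p.1 ∧ Odd p.2)), X p.1 ∩ Y p.2) :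
    (∀ k, k < n + m - 1 → Z k ∈ F) ∧ (∀ k, n + m - 1 ≤ k → Z k = ∅) ∧
    (∀ i j, i ≤ j → Z j ⊆ Z i) ∧ altDiff Z = altDiff X ∩ altDiff Y ∧
    altDiff X ∩ altDiff Y ∈ diffHier F (n + m - 1) := by
  -- Every `Z k` is in `F` (finite union of members of `F`).
  have hZF : ∀ k, Z k ∈ F := by
    intro k
    have heq : Z k = ⋃ i ∈ Finset.range (k + 1),
        (if i % 2 = 1 ∧ (k - i) % 2 = 1 then (∅ : Set E) else X i ∩ Y (k - i)) := by
      rw [hZ]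
      ext x
      simp only [Set.mem_iUnion, Finset.mem_range, Set.mem_inter_iff, Nat.odd_iff]
      constructor
      · rintro ⟨⟨a, b⟩, ⟨hab, hodd⟩, hx, hy⟩
        refine ⟨a, by omega, ?_⟩
        have hb : k - a = b := by omega
        rw [hb, if_neg hodd]
        exact ⟨hx, hy⟩
      · rintro ⟨i, hik, hmem⟩
        by_cases hc : i % 2 = 1 ∧ (k - i) % 2 = 1
        · rw [if_pos hc] at hmem; exact absurd hmem (Set.notMem_empty x)
        · rw [if_neg hc] at hmem
          exact ⟨(i, k - i), ⟨by omega, hc⟩, hmem.1, hmem.2⟩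
    rw [heq]
    apply finUnion_mem F hempty hunion
    intro i _
    by_cases hc : i % 2 = 1 ∧ (k - i) % 2 = 1
    · rw [if_pos hc]; exact hempty
    · rw [if_neg hc]
      by_cases hi : i < n
      · by_cases hj : k - i < m
        · exact hinter _ (hXF i hi) _ (hYF _ hj)
        · rw [hYe _ (by omega)]; simpa using hempty
      · rw [hXe _ (by omega)]; simpa using hempty
  -- `Z k` is empty for `k ≥ n + m - 1`.
  have hZe : ∀ k, n + m - 1 ≤ k → Z k = ∅ := by
    intro k hk
    rw [hZ, Set.eq_empty_iff_forall_notMem]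
    intro x hx
    simp only [Set.mem_iUnion, Set.mem_inter_iff] at hx
    obtain ⟨⟨a, b⟩, ⟨hab, -⟩, hx, hy⟩ := hx
    by_cases han : a < n
    · rw [hYe b (by omega)] at hy; exact hy
    · rw [hXe a (by omega)] at hx; exact hx
  -- `Z` is decreasing.
  have hZstep : ∀ k, Z (k + 1) ⊆ Z k := by
    intro k x hx
    rw [hZ] at hx ⊢
    simp only [Set.mem_iUnion, Set.mem_inter_iff, Nat.odd_iff] at hx ⊢
    obtain ⟨⟨a, b⟩, ⟨hab, hodd⟩, hx, hy⟩ := hx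
    rcases Nat.even_or_odd a with ha | ha
    · rw [Nat.even_iff] at ha
      rcases Nat.eq_zero_or_pos b with hb | hb
      · exact ⟨(a - 1, 0), ⟨by omega, by omega⟩, hXdec _ _ (by omega) hx, hb ▸ hy⟩
      · exact ⟨(a, b - 1), ⟨by omega, by omega⟩, hx, hYdec _ _ (by omega) hy⟩
    · rw [Nat.odd_iff] at ha
      exact ⟨(a - 1, b), ⟨by omega, by omega⟩, hXdec _ _ (by omega) hx, hy⟩
  have hZdecAux : ∀ d i, Z (i + d) ⊆ Z i := by
    intro d
    induction d with
    | zero => intro i; exact subset_rfl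
    | succ d ih => intro i; exact (hZstep (i + d)).trans (ih i)
  have hZdec : ∀ i j, i ≤ j → Z j ⊆ Z i := by
    intro i j hij
    obtain ⟨d, rfl⟩ := Nat.exists_eq_add_of_le hij
    exact hZdecAux d i
  -- The alternating difference of `Z` is `altDiff X ∩ altDiff Y`.
  have hEq : altDiff Z = altDiff X ∩ altDiff Y := by
    ext x
    have eX : ∃ i, x ∉ X i := ⟨n, by simp [hXe n le_rfl]⟩
    have eY : ∃ j, x ∉ Y j := ⟨m, by simp [hYe m le_rfl]⟩
    have eZ : ∃ k, x ∉ Z k := ⟨n + m, by simp [hZe (n + m) (by omega)]⟩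
    have hmemZ : ∀ k, x ∈ Z k ↔
        ∃ a b, a + b = k ∧ ¬(a % 2 = 1 ∧ b % 2 = 1) ∧
          a < Nat.find eX ∧ b < Nat.find eY := by
      intro k
      rw [hZ]
      simp only [Set.mem_iUnion, Set.mem_inter_iff, Nat.odd_iff, Prod.exists]
      constructor
      · rintro ⟨a, b, ⟨hab, hodd⟩, hx, hy⟩
        rw [count_mem_iff X hXdec x eX] at hx
        rw [count_mem_iff Y hYdec x eY] at hy
        exact ⟨a, b, hab, hodd, hx, hy⟩
      · rintro ⟨a, b, hab, hodd, hx, hy⟩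
        rw [← count_mem_iff X hXdec x eX] at hx
        rw [← count_mem_iff Y hYdec x eY] at hy
        exact ⟨a, b, ⟨hab, hodd⟩, hx, hy⟩
    have hmemZ' : ∀ k, x ∈ Z k ↔ k < Nat.find eZ := count_mem_iff Z hZdec x eZ
    have key : Nat.find eZ % 2 = 1 ↔
        (Nat.find eX % 2 = 1 ∧ Nat.find eY % 2 = 1) := by
      set p := Nat.find eX with hp
      set q := Nat.find eY with hq
      by_cases hp0 : p = 0
      · have h0 : ¬(0 < Nat.find eZ) := by
          intro h
          obtain ⟨a, b, -, -, ha, -⟩ := (hmemZ 0).1 ((hmemZ' 0).2 h)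
          omega
        omega
      · by_cases hq0 : q = 0
        · have h0 : ¬(0 < Nat.find eZ) := by
            intro h
            obtain ⟨a, b, -, -, -, hb⟩ := (hmemZ 0).1 ((hmemZ' 0).2 h)
            omega
          omega
        · by_cases hpe : p % 2 = 0 ∧ q % 2 = 0
          · have h1 : p + q - 3 < Nat.find eZ :=
              (hmemZ' _).1 ((hmemZ _).2
                ⟨p - 1, q - 2, by omega, by omega, by omega, by omega⟩)
            have h2 : ¬(p + q - 2 < Nat.find eZ) := by
              intro h
              obtain ⟨a, b, hab, hodd, ha, hb⟩ := (hmemZ _).1 ((hmemZ' _).2 h)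
              omega
            omega
          · have h1 : p + q - 2 < Nat.find eZ :=
              (hmemZ' _).1 ((hmemZ _).2
                ⟨p - 1, q - 1, by omega, by omega, by omega, by omega⟩)
            have h2 : ¬(p + q - 1 < Nat.find eZ) := by
              intro h
              obtain ⟨a, b, hab, hodd, ha, hb⟩ := (hmemZ _).1 ((hmemZ' _).2 h)
              omega
            omega
    rw [Set.mem_inter_iff, mem_altDiff_iff Z hZdec x eZ,
      mem_altDiff_iff X hXdec x eX, mem_altDiff_iff Y hYdec x eY]
    exact key
  exact ⟨fun k _ => hZF k, hZe, hZdec, hEq,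
    ⟨Z, fun i _ => hZF i, hZe, hZdec, hEq.symm⟩⟩
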